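/- Let G be a finite connected simple graph, W an edge clique cover of G, and C a block of G. Let {W1, W2, Wo} be a partition of W into good parts with W1 ∪ W2 ⊆ W[C], and let C' be a block of G that is a component of the part Wo with N(C') = N(C). Set Ω = V(G) \ V(G, W1, W2, Wo). If H is any graph with V(H) = N[C] and E(H) equal to the set of all pairs inside Ω together with the union of E(H_i) over all C_i in C(W1) ∪ C(W2) ∪ (C(Wo) minus the set of connected components of G \ N(C)), where each H_i is any triangulation of R(C_i), then H is a triangulation of the realization R(C). -/

import Mathlib

open scoped Classical

namespace PaperECC

variable {V : Type*}

/-- `nbhd G X` is N(X): vertices outside `X` with a neighbor in `X`. -/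
def nbhd (G : SimpleGraph V) (X : Set V) : Set V :=
  {v | v ∉ X ∧ ∃ u ∈ X, G.Adj u v}

/-- `closedNbhd G X` is N[X] = X ∪ N(X). -/
def closedNbhd (G : SimpleGraph V) (X : Set V) : Set V :=
  X ∪ nbhd G X

/-- closed neighborhood N[v] of a single vertex. -/
def vNbhd (G : SimpleGraph V) (v : V) : Set V :=
  insert v (G.neighborSet v)

/-- `IsCompOf G X C`: `C` is the vertex set of a connected component of `G \ X`. -/
def IsCompOf (G : SimpleGraph V) (X C : Set V) : Prop :=
  C.Nonempty ∧ Disjoint C X ∧ (G.induce C).Connected ∧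
    ∀ u ∈ C, ∀ v, v ∉ X → G.Adj u v → v ∈ C

/-- `C` is a full component of `X`: a component of `G \ X` with N(C) = X. -/
def IsFullCompOf (G : SimpleGraph V) (X C : Set V) : Prop :=
  IsCompOf G X C ∧ nbhd G C = X

/-- `S` is a minimal separator of `G`: it has at least two full components. -/
def IsMinSep (G : SimpleGraph V) (S : Set V) : Prop :=
  ∃ C D : Set V, C ≠ D ∧ IsFullCompOf G S C ∧ IsFullCompOf G S D

/-- `C` is a block of `G`: a component of `G \ N(C)` whose neighborhood is a minimal separator. -/
def IsBlock (G : SimpleGraph V) (C : Set V) : Prop :=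
  IsCompOf G (nbhd G C) C ∧ IsMinSep G (nbhd G C)

/-- `H` is chordal: every (injectively embedded) cycle on at least 4 vertices has a chord,
i.e. there is no induced cycle on four or more vertices. -/
def IsChordal (H : SimpleGraph V) : Prop :=
  ∀ n : ℕ, 4 ≤ n → ∀ f : ZMod n → V, Function.Injective f →
    (∀ i, H.Adj (f i) (f (i + 1))) →
    ∃ i j : ZMod n, i ≠ j ∧ j ≠ i + 1 ∧ i ≠ j + 1 ∧ H.Adj (f i) (f j)

/-- `H` is a triangulation of `G` (on the same vertex set). -/
def IsTri (G H : SimpleGraph V) : Prop :=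
  IsChordal H ∧ G ≤ H

/-- `H` is a minimal triangulation of `G`. -/
def IsMinTri (G H : SimpleGraph V) : Prop :=
  IsTri G H ∧ ∀ H' : SimpleGraph V, IsTri G H' → H' ≤ H → H' = H

/-- `Ω` is a maximal clique of `H`. -/
def IsMaxClique (H : SimpleGraph V) (Ω : Set V) : Prop :=
  H.IsClique Ω ∧ ∀ Ω' : Set V, H.IsClique Ω' → Ω ⊆ Ω' → Ω' = Ω

/-- `Ω` is a potential maximal clique of `G`: a maximal clique of some minimal triangulation. -/
def IsPMC (G : SimpleGraph V) (Ω : Set V) : Prop :=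
  ∃ H : SimpleGraph V, IsMinTri G H ∧ IsMaxClique H Ω

/-- `W` is an edge clique cover of `G`: a finite collection of cliques covering all edges. -/
def IsECC (G : SimpleGraph V) (W : Finset (Set V)) : Prop :=
  (∀ K ∈ W, G.IsClique K) ∧ ∀ u v : V, G.Adj u v → ∃ K ∈ W, u ∈ K ∧ v ∈ K

/-- `W[X]`: the cliques of `W` intersecting the vertex set `X`. -/
noncomputable def meeting (W : Finset (Set V)) (X : Set V) : Finset (Set V) :=
  W.filter (fun K => (K ∩ X).Nonempty)

/-- `V(G, W')`: the vertices all of whose cliques (within `W`) belong to `W'`. -/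
def partVerts (W W' : Finset (Set V)) : Set V :=
  {v | ∀ K ∈ W, v ∈ K → K ∈ W'}

/-- The connected components of the subgraph of `G` induced on a vertex set `Y`. -/
def compsOf (G : SimpleGraph V) (Y : Set V) : Set (Set V) :=
  {C | IsCompOf G Yᶜ C}

/-- `C(W')`: the components of the part `W'` of the edge clique cover `W`. -/
def partComps (G : SimpleGraph V) (W W' : Finset (Set V)) : Set (Set V) :=
  compsOf G (partVerts W W')

/-- `W'` is a good part of `W`: a nonempty subset all of whose components are blocks of `G`. -/
def IsGoodPart (G : SimpleGraph V) (W W' : Finset (Set V)) : Prop :=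
  W' ⊆ W ∧ W'.Nonempty ∧ ∀ C ∈ partComps G W W', IsBlock G C

/-- The realization `R(C)` of a block `C`, as a graph supported on `N[C]`:
edges of `G[N[C]]` together with all pairs inside `N(C)`. -/
def realization (G : SimpleGraph V) (C : Set V) : SimpleGraph V where
  Adj u v := u ≠ v ∧ u ∈ closedNbhd G C ∧ v ∈ closedNbhd G C ∧
    (G.Adj u v ∨ (u ∈ nbhd G C ∧ v ∈ nbhd G C))
  symm := by
    constructor
    intro u v h
    exact ⟨h.1.symm, h.2.2.1, h.2.1, h.2.2.2.elim (fun a => Or.inl a.symm)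
      (fun a => Or.inr ⟨a.2, a.1⟩)⟩
  loopless := ⟨fun u h => h.1 rfl⟩

/-- The complete graph on the vertex set `Ω` (supported on `Ω`): all pairs inside `Ω`. -/
def cliqueOn (Ω : Set V) : SimpleGraph V where
  Adj u v := u ≠ v ∧ u ∈ Ω ∧ v ∈ Ω
  symm := ⟨fun u v h => ⟨h.1.symm, h.2.2, h.2.1⟩⟩
  loopless := ⟨fun u h => h.1 rfl⟩

/-- The induced subgraph `G[A]`, as a graph supported on `A`. -/
def inducedOn (G : SimpleGraph V) (A : Set V) : SimpleGraph V where
  Adj u v := G.Adj u v ∧ u ∈ A ∧ v ∈ A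
  symm := ⟨fun u v h => ⟨h.1.symm, h.2.2, h.2.1⟩⟩
  loopless := ⟨fun u h => G.loopless.irrefl u h.1⟩

/-- All edges of `H` lie inside the vertex set `A` (i.e. `H` has vertex set `A`). -/
def edgesWithin (H : SimpleGraph V) (A : Set V) : Prop :=
  ∀ u v : V, H.Adj u v → u ∈ A ∧ v ∈ A

/-- `H` is a triangulation of the graph `G'` with vertex set `A`. -/
def IsTriOn (G' : SimpleGraph V) (A : Set V) (H : SimpleGraph V) : Prop :=
  IsChordal H ∧ G' ≤ H ∧ edgesWithin H A

/-- `H` is a minimal triangulation of the graph `G'` with vertex set `A`. -/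
def IsMinTriOn (G' : SimpleGraph V) (A : Set V) (H : SimpleGraph V) : Prop :=
  IsTriOn G' A H ∧ ∀ H' : SimpleGraph V, IsTriOn G' A H' → H' ≤ H → H' = H

/-- `M` is a module of `G`. -/
def IsModule (G : SimpleGraph V) (M : Set V) : Prop :=
  ∀ v ∉ M, (∀ u ∈ M, G.Adj v u) ∨ (∀ u ∈ M, ¬ G.Adj v u)


section Aux

lemma reach_mem {G : SimpleGraph V} {Y : Set V} {v u : V} (hv : v ∈ Y)
    (h : Relation.ReflTransGen (fun a b => G.Adj a b ∧ b ∈ Y) v u) : u ∈ Y := by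
  induction h with
  | refl => exact hv
  | tail _ h2 _ => exact h2.2

lemma compOf_exists (G : SimpleGraph V) (Y : Set V) {v : V} (hv : v ∈ Y) :
    ∃ Cc : Set V, IsCompOf G Yᶜ Cc ∧ v ∈ Cc := by
  set r := fun a b => G.Adj a b ∧ b ∈ Y with hr
  refine ⟨{u | Relation.ReflTransGen r v u}, ⟨⟨v, Relation.ReflTransGen.refl⟩, ?_, ?_, ?_⟩,
    Relation.ReflTransGen.refl⟩
  · rw [Set.disjoint_left]
    intro a ha hac
    exact hac (reach_mem hv ha)
  · have key : ∀ u (h : Relation.ReflTransGen r v u),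
        (G.induce {u | Relation.ReflTransGen r v u}).Reachable
          ⟨v, Relation.ReflTransGen.refl⟩ ⟨u, h⟩ := by
      intro u h
      induction h with
      | refl => exact SimpleGraph.Reachable.refl _
      | @tail b c h1 h2 ih =>
          exact ih.trans (SimpleGraph.Adj.reachable
            (show G.Adj (⟨b, h1⟩ : {u | Relation.ReflTransGen r v u}).1
              (⟨c, h1.tail h2⟩ : {u | Relation.ReflTransGen r v u}).1 from h2.1))
    rw [SimpleGraph.connected_iff]
    refine ⟨?_, ⟨⟨v, Relation.ReflTransGen.refl⟩⟩⟩
    intro a b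
    exact (key a.1 a.2).symm.trans (key b.1 b.2)
  · intro u hu w hw hadjw
    exact hu.tail ⟨hadjw, Set.notMem_compl_iff.mp hw⟩

lemma comp_absorb {G : SimpleGraph V} {X D A : Set V} (hD : IsCompOf G X D)
    (hconn : (G.induce A).Connected) (hdisj : ∀ a ∈ A, a ∉ X)
    {x : V} (hxA : x ∈ A) (hxD : x ∈ D) : A ⊆ D := by
  have key : ∀ (a b : A), (G.induce A).Walk a b → a.1 ∈ D → b.1 ∈ D := by
    intro a b w
    induction w with
    | nil => exact id
    | @cons a c b h p ih =>
        intro ha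
        exact ih (hD.2.2.2 _ ha _ (hdisj c.1 c.2) h)
  intro u hu
  obtain ⟨w⟩ := hconn.preconnected ⟨x, hxA⟩ ⟨u, hu⟩
  exact key _ _ w hxD

lemma comp_eq_of_meet {G : SimpleGraph V} {X C1 C2 : Set V} (h1 : IsCompOf G X C1)
    (h2 : IsCompOf G X C2) (hmeet : (C1 ∩ C2).Nonempty) : C1 = C2 := by
  obtain ⟨x, hx1, hx2⟩ := hmeet
  exact Set.Subset.antisymm
    (comp_absorb h2 h1.2.2.1 (fun a ha => Set.disjoint_left.mp h1.2.1 ha) hx1 hx2)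
    (comp_absorb h1 h2.2.2.1 (fun a ha => Set.disjoint_left.mp h2.2.1 ha) hx2 hx1)

lemma zmod_cast_ne {n : ℕ} [NeZero n] {a b : ℕ} (ha : a < n) (hb : b < n) (hne : a ≠ b) :
    (a : ZMod n) ≠ (b : ZMod n) := by
  intro h
  apply hne
  have := congrArg ZMod.val h
  rwa [ZMod.val_cast_of_lt ha, ZMod.val_cast_of_lt hb] at this

lemma cliqueOn_adj (Ω : Set V) (a b : V) :
    (cliqueOn Ω).Adj a b ↔ a ≠ b ∧ a ∈ Ω ∧ b ∈ Ω := Iff.rfl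

lemma realization_adj (G : SimpleGraph V) (C : Set V) (a b : V) :
    (realization G C).Adj a b ↔ a ≠ b ∧ a ∈ closedNbhd G C ∧ b ∈ closedNbhd G C ∧
      (G.Adj a b ∨ (a ∈ nbhd G C ∧ b ∈ nbhd G C)) := Iff.rfl

end Aux

/-- Soundness: any graph assembled from a partition `{W1, W2, Wo}` of the
edge clique cover into good parts (with `W1 ∪ W2 ⊆ W[C]` and a block `C' ∈ C(Wo)` with
`N(C') = N(C)`) together with triangulations of the realizations of the smaller blocks is a
triangulation of `R(C)`. -/
theorem tri_realization_soundness {V : Type*} [Fintype V]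
    (G : SimpleGraph V) (hG : G.Connected) (W : Finset (Set V)) (hW : IsECC G W)
    (C : Set V) (hC : IsBlock G C) (W1 W2 Wo : Finset (Set V))
    (hpart : W1 ∪ W2 ∪ Wo = W) (h12 : Disjoint W1 W2) (h1o : Disjoint W1 Wo)
    (h2o : Disjoint W2 Wo)
    (hg1 : IsGoodPart G W W1) (hg2 : IsGoodPart G W W2) (hgo : IsGoodPart G W Wo)
    (hsub : W1 ∪ W2 ⊆ meeting W C)
    (C' : Set V) (hC'mem : C' ∈ partComps G W Wo) (hC'blk : IsBlock G C')
    (hC'nb : nbhd G C' = nbhd G C)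
    (F : Set V → SimpleGraph V)
    (hF : ∀ Ci ∈ partComps G W W1 ∪ partComps G W W2 ∪
        (partComps G W Wo \ {D : Set V | IsCompOf G (nbhd G C) D}),
      IsTriOn (realization G Ci) (closedNbhd G Ci) (F Ci))
    (H : SimpleGraph V)
    (hHE : H = cliqueOn ((partVerts W W1 ∪ partVerts W W2 ∪ partVerts W Wo)ᶜ) ⊔
      ⨆ Ci ∈ partComps G W W1 ∪ partComps G W W2 ∪
        (partComps G W Wo \ {D : Set V | IsCompOf G (nbhd G C) D}), F Ci) :
    IsTriOn (realization G C) (closedNbhd G C) H := by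
  classical
  set Om : Set V := (partVerts W W1 ∪ partVerts W W2 ∪ partVerts W Wo)ᶜ with hOm
  set Fam : Set (Set V) := partComps G W W1 ∪ partComps G W W2 ∪
      (partComps G W Wo \ {D : Set V | IsCompOf G (nbhd G C) D}) with hFam
  obtain ⟨hCcomp, hCminsep⟩ := hC
  obtain ⟨A1, A2, hA12, ⟨hA1c, _⟩, ⟨hA2c, _⟩⟩ := hCminsep
  obtain ⟨x0, hx0⟩ := hA1c.1
  obtain ⟨y0, hy0⟩ := hA2c.1
  have hxy : x0 ≠ y0 := by
    intro h
    exact hA12 (comp_eq_of_meet hA1c hA2c ⟨x0, hx0, h ▸ hy0⟩)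
  -- every vertex lies in some clique of W
  have hvK : ∀ v : V, ∃ K ∈ W, v ∈ K := by
    intro v
    have hex : ∃ w : V, w ≠ v := by
      by_cases h : v = x0
      · exact ⟨y0, fun hy => hxy (h ▸ hy.symm ▸ rfl)⟩
      · exact ⟨x0, fun hx => h hx.symm⟩
    obtain ⟨w, hw⟩ := hex
    obtain ⟨wlk⟩ := hG.preconnected v w
    cases wlk with
    | nil => exact absurd rfl hw
    | cons h p =>
        obtain ⟨K, hKW, hvm, _⟩ := hW.2 _ _ h
        exact ⟨K, hKW, hvm⟩
  have hOmMem : ∀ a : V, a ∈ Om ↔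
      (a ∉ partVerts W W1 ∧ a ∉ partVerts W W2 ∧ a ∉ partVerts W Wo) := by
    intro a
    rw [hOm]
    simp [Set.mem_compl_iff, Set.mem_union, not_or, and_assoc]
  have hOmMem' : ∀ a : V, a ∉ Om ↔
      (a ∈ partVerts W W1 ∨ a ∈ partVerts W W2 ∨ a ∈ partVerts W Wo) := by
    intro a
    rw [hOm, Set.notMem_compl_iff]
    simp [Set.mem_union, or_assoc]
  have hpartdisj : ∀ {Wa Wb : Finset (Set V)}, Disjoint Wa Wb → ∀ v : V,
      v ∈ partVerts W Wa → v ∈ partVerts W Wb → False := by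
    intro Wa Wb hd v hva hvb
    obtain ⟨K, hKW, hvKm⟩ := hvK v
    exact Finset.disjoint_left.mp hd (hva K hKW hvKm) (hvb K hKW hvKm)
  have hWsplit : ∀ K ∈ W, K ∈ W1 ∨ K ∈ W2 ∨ K ∈ Wo := by
    intro K hK
    rw [← hpart] at hK
    rcases Finset.mem_union.mp hK with h | h
    · rcases Finset.mem_union.mp h with h | h
      exacts [Or.inl h, Or.inr (Or.inl h)]
    · exact Or.inr (Or.inr h)
  have hmeetC : ∀ K : Set V, K ∈ W1 ∨ K ∈ W2 → K ∈ W ∧ ∃ c ∈ C, c ∈ K := by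
    intro K hK
    have hKm : K ∈ meeting W C := by
      refine hsub (Finset.mem_union.mpr ?_)
      exact hK
    rw [meeting, Finset.mem_filter] at hKm
    obtain ⟨c, hc⟩ := hKm.2
    exact ⟨hKm.1, c, hc.2, hc.1⟩
  have hNc : ∀ (v : V) (K : Set V), K ∈ W → v ∈ K → (∃ c ∈ C, c ∈ K) →
      v ∈ closedNbhd G C := by
    rintro v K hKW hvKm ⟨c, hcC, hcK⟩
    by_cases hvC : v ∈ C
    · exact Set.mem_union_left _ hvC
    · refine Set.mem_union_right _ ⟨hvC, c, hcC, ?_⟩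
      have hne : c ≠ v := fun h => hvC (h ▸ hcC)
      exact hW.1 K hKW hcK hvKm hne
  -- facts about C'
  have hC'comp : IsCompOf G (partVerts W Wo)ᶜ C' := hC'mem
  have hC'sub : ∀ u ∈ C', u ∈ partVerts W Wo := fun u hu =>
    Set.notMem_compl_iff.mp (Set.disjoint_left.mp hC'comp.2.1 hu)
  -- N(C) ⊆ Ω
  have hSOm : ∀ v ∈ nbhd G C, v ∈ Om := by
    intro v hv
    rw [← hC'nb] at hv
    obtain ⟨hvC', u, huC', hadjuv⟩ := hv
    obtain ⟨K, hKW, huK, hvKm⟩ := hW.2 u v hadjuv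
    have hKWo : K ∈ Wo := hC'sub u huC' K hKW huK
    rw [hOmMem]
    refine ⟨?_, ?_, ?_⟩
    · intro hv1; exact Finset.disjoint_left.mp h1o (hv1 K hKW hvKm) hKWo
    · intro hv2; exact Finset.disjoint_left.mp h2o (hv2 K hKW hvKm) hKWo
    · intro hvWo
      exact hvC' (hC'comp.2.2.2 u huC' v (Set.notMem_compl_iff.mpr hvWo) hadjuv)
  -- Ω ⊆ N[C]
  have hOmN : ∀ v ∈ Om, v ∈ closedNbhd G C := by
    intro v hv
    have h3 : v ∉ partVerts W Wo := ((hOmMem v).mp hv).2.2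
    rw [partVerts, Set.mem_setOf_eq] at h3
    push_neg at h3
    obtain ⟨K, hKW, hvKm, hKnWo⟩ := h3
    have hK12 : K ∈ W1 ∨ K ∈ W2 := by
      rcases hWsplit K hKW with h | h | h
      exacts [Or.inl h, Or.inr h, absurd h hKnWo]
    exact hNc v K hKW hvKm (hmeetC K hK12).2
  have hfamSpec : ∀ Ci ∈ Fam, ∃ Wx : Finset (Set V),
      (Wx = W1 ∨ Wx = W2 ∨ Wx = Wo) ∧ IsCompOf G (partVerts W Wx)ᶜ Ci := by
    intro Ci hCi
    rw [hFam] at hCi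
    simp only [Set.mem_union, Set.mem_diff] at hCi
    rcases hCi with (h | h) | ⟨h, _⟩
    exacts [⟨W1, Or.inl rfl, h⟩, ⟨W2, Or.inr (Or.inl rfl), h⟩, ⟨Wo, Or.inr (Or.inr rfl), h⟩]
  have hbOm : ∀ (Wx : Finset (Set V)), (Wx = W1 ∨ Wx = W2 ∨ Wx = Wo) →
      ∀ {Ci : Set V}, IsCompOf G (partVerts W Wx)ᶜ Ci → ∀ v ∈ Ci, v ∉ Om := by
    intro Wx hWx Ci hCi v hv hvOm
    have hvp : v ∈ partVerts W Wx :=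
      Set.notMem_compl_iff.mp (Set.disjoint_left.mp hCi.2.1 hv)
    rw [hOmMem] at hvOm
    rcases hWx with rfl | rfl | rfl
    exacts [hvOm.1 hvp, hvOm.2.1 hvp, hvOm.2.2 hvp]
  have hdisj3 : ∀ (Wa Wb : Finset (Set V)), (Wa = W1 ∨ Wa = W2 ∨ Wa = Wo) →
      (Wb = W1 ∨ Wb = W2 ∨ Wb = Wo) → Wa ≠ Wb → Disjoint Wa Wb := by
    intro Wa Wb ha hb hne
    rcases ha with rfl | rfl | rfl <;> rcases hb with rfl | rfl | rfl <;>
      first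
        | exact absurd rfl hne
        | exact h12
        | exact h1o
        | exact h2o
        | exact h12.symm
        | exact h1o.symm
        | exact h2o.symm
  have huniq : ∀ Ci ∈ Fam, ∀ Cj ∈ Fam, ∀ v : V, v ∈ Ci → v ∈ Cj → Ci = Cj := by
    intro Ci hCi Cj hCj v hvi hvj
    obtain ⟨Wa, hWa, hca⟩ := hfamSpec Ci hCi
    obtain ⟨Wb, hWb, hcb⟩ := hfamSpec Cj hCj
    by_cases hab : Wa = Wb
    · subst hab
      exact comp_eq_of_meet hca hcb ⟨v, hvi, hvj⟩
    · exact (hpartdisj (hdisj3 Wa Wb hWa hWb hab) v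
        (Set.notMem_compl_iff.mp (Set.disjoint_left.mp hca.2.1 hvi))
        (Set.notMem_compl_iff.mp (Set.disjoint_left.mp hcb.2.1 hvj))).elim
  have hnbOm : ∀ (Wx : Finset (Set V)), (Wx = W1 ∨ Wx = W2 ∨ Wx = Wo) →
      ∀ {Ci : Set V}, IsCompOf G (partVerts W Wx)ᶜ Ci → ∀ x ∈ nbhd G Ci, x ∈ Om := by
    intro Wx hWx Ci hCi x hx
    obtain ⟨hxCi, u, huCi, hadjux⟩ := hx
    obtain ⟨K, hKW, huK, hxK⟩ := hW.2 u x hadjux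
    have hKWx : K ∈ Wx :=
      (Set.notMem_compl_iff.mp (Set.disjoint_left.mp hCi.2.1 huCi)) K hKW huK
    have hxnp : x ∉ partVerts W Wx := by
      intro hxp
      exact hxCi (hCi.2.2.2 u huCi x (Set.notMem_compl_iff.mpr hxp) hadjux)
    have hother : ∀ Wy : Finset (Set V), Disjoint Wx Wy → x ∉ partVerts W Wy := by
      intro Wy hd hxp
      exact Finset.disjoint_left.mp hd hKWx (hxp K hKW hxK)
    rw [hOmMem]
    rcases hWx with rfl | rfl | rfl
    · exact ⟨hxnp, hother W2 h12, hother Wo h1o⟩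
    · exact ⟨hother W1 h12.symm, hxnp, hother Wo h2o⟩
    · exact ⟨hother W1 h1o.symm, hother W2 h2o.symm, hxnp⟩
  have hCiOm' : ∀ Ci ∈ Fam, ∀ v ∈ Ci, v ∉ Om := by
    intro Ci hCi v hv
    obtain ⟨Wx, hWx, hc⟩ := hfamSpec Ci hCi
    exact hbOm Wx hWx hc v hv
  have hnbOm' : ∀ Ci ∈ Fam, ∀ x ∈ nbhd G Ci, x ∈ Om := by
    intro Ci hCi x hx
    obtain ⟨Wx, hWx, hc⟩ := hfamSpec Ci hCi
    exact hnbOm Wx hWx hc x hx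
  have hvert12 : ∀ (Wx : Finset (Set V)), (Wx = W1 ∨ Wx = W2) →
      ∀ {Ci : Set V}, IsCompOf G (partVerts W Wx)ᶜ Ci →
      ∀ v ∈ Ci, v ∈ closedNbhd G C := by
    intro Wx hWx Ci hCi v hv
    obtain ⟨K, hKW, hvKm⟩ := hvK v
    have hKx : K ∈ Wx :=
      (Set.notMem_compl_iff.mp (Set.disjoint_left.mp hCi.2.1 hv)) K hKW hvKm
    have hK12 : K ∈ W1 ∨ K ∈ W2 := by
      rcases hWx with rfl | rfl
      exacts [Or.inl hKx, Or.inr hKx]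
    exact hNc v K hKW hvKm (hmeetC K hK12).2
  -- the key geometric fact: non-excluded Wo-components live inside C
  have hWoC : ∀ {Ci : Set V}, Ci ∈ partComps G W Wo →
      Ci ∉ {D : Set V | IsCompOf G (nbhd G C) D} → Ci ⊆ C := by
    intro Ci hCi hnex
    have hCic : IsCompOf G (partVerts W Wo)ᶜ Ci := hCi
    obtain ⟨v0, hv0⟩ := hCic.1
    have hCisub : ∀ u ∈ Ci, u ∈ partVerts W Wo := fun u hu =>
      Set.notMem_compl_iff.mp (Set.disjoint_left.mp hCic.2.1 hu)
    have hCiS : ∀ u ∈ Ci, u ∉ nbhd G C := by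
      intro u hu huS
      have h := hSOm u huS
      rw [hOmMem] at h
      exact h.2.2 (hCisub u hu)
    have hv0S : v0 ∈ (nbhd G C)ᶜ := hCiS v0 hv0
    obtain ⟨D, hD, hv0D⟩ := compOf_exists G (nbhd G C)ᶜ hv0S
    rw [compl_compl] at hD
    have hCiD : Ci ⊆ D := comp_absorb hD hCic.2.2.1 hCiS hv0 hv0D
    by_cases hDC : D = C
    · exact hDC ▸ hCiD
    · exfalso
      have hDdisjC : ∀ a ∈ D, a ∉ C := fun a ha hac =>
        hDC (comp_eq_of_meet hD hCcomp ⟨a, ha, hac⟩)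
      have hDp : ∀ v ∈ D, v ∈ partVerts W Wo := by
        intro v hvD K hKW hvKm
        rcases hWsplit K hKW with h | h | h
        · exfalso
          rcases hNc v K hKW hvKm (hmeetC K (Or.inl h)).2 with h' | h'
          · exact hDdisjC v hvD h'
          · exact Set.disjoint_left.mp hD.2.1 hvD h'
        · exfalso
          rcases hNc v K hKW hvKm (hmeetC K (Or.inr h)).2 with h' | h'
          · exact hDdisjC v hvD h'
          · exact Set.disjoint_left.mp hD.2.1 hvD h'
        · exact h
      have hDcompWo : IsCompOf G (partVerts W Wo)ᶜ D := by
        refine ⟨hD.1, Set.disjoint_left.mpr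
          (fun a ha => Set.notMem_compl_iff.mpr (hDp a ha)), hD.2.2.1, ?_⟩
        intro u hu w hw hadjw
        refine hD.2.2.2 u hu w ?_ hadjw
        intro hwS
        have h := hSOm w hwS
        rw [hOmMem] at h
        exact h.2.2 (Set.notMem_compl_iff.mp hw)
      have hCiD' : Ci = D := comp_eq_of_meet hCic hDcompWo ⟨v0, hv0, hv0D⟩
      exact hnex (by rw [Set.mem_setOf_eq, hCiD']; exact hD)
  -- vertex bound for family members
  have hfamN : ∀ Ci ∈ Fam, ∀ v ∈ closedNbhd G Ci, v ∈ closedNbhd G C := by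
    intro Ci hCi v hv
    have h12case : ∀ (Wx : Finset (Set V)), (Wx = W1 ∨ Wx = W2) →
        IsCompOf G (partVerts W Wx)ᶜ Ci → v ∈ closedNbhd G C := by
      intro Wx hWx hc
      rcases hv with hv | ⟨hvCi, u, huCi, hadjuv⟩
      · exact hvert12 Wx hWx hc v hv
      · obtain ⟨K, hKW, huK, hvKm⟩ := hW.2 u v hadjuv
        have hKx : K ∈ Wx :=
          (Set.notMem_compl_iff.mp (Set.disjoint_left.mp hc.2.1 huCi)) K hKW huK
        have hK12 : K ∈ W1 ∨ K ∈ W2 := by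
          rcases hWx with rfl | rfl
          exacts [Or.inl hKx, Or.inr hKx]
        exact hNc v K hKW hvKm (hmeetC K hK12).2
    rw [hFam] at hCi
    simp only [Set.mem_union, Set.mem_diff] at hCi
    rcases hCi with (h | h) | ⟨h, hnex⟩
    · exact h12case W1 (Or.inl rfl) h
    · exact h12case W2 (Or.inr rfl) h
    · have hsubC := hWoC h hnex
      rcases hv with hv | ⟨hvCi, u, huCi, hadjuv⟩
      · exact Set.mem_union_left _ (hsubC hv)
      · by_cases hvC : v ∈ C
        · exact Set.mem_union_left _ hvC
        · exact Set.mem_union_right _ ⟨hvC, u, hsubC huCi, hadjuv⟩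
  -- every non-Ω vertex of N[C] lies in a family block
  have hmemblk : ∀ u : V, u ∉ Om → u ∈ closedNbhd G C → ∃ Ci ∈ Fam, u ∈ Ci := by
    intro u huOm huN
    rcases (hOmMem' u).mp huOm with h1 | h2 | h3
    · obtain ⟨Ci, hCi, hu⟩ := compOf_exists G (partVerts W W1) h1
      refine ⟨Ci, ?_, hu⟩
      rw [hFam]
      exact Set.mem_union_left _ (Set.mem_union_left _ hCi)
    · obtain ⟨Ci, hCi, hu⟩ := compOf_exists G (partVerts W W2) h2
      refine ⟨Ci, ?_, hu⟩
      rw [hFam]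
      exact Set.mem_union_left _ (Set.mem_union_right _ hCi)
    · obtain ⟨Ci, hCi, hu⟩ := compOf_exists G (partVerts W Wo) h3
      refine ⟨Ci, ?_, hu⟩
      rw [hFam]
      refine Set.mem_union_right _ ⟨hCi, ?_⟩
      intro hex
      rw [Set.mem_setOf_eq] at hex
      have huS : u ∉ nbhd G C := Set.disjoint_left.mp hex.2.1 hu
      have huC : u ∈ C := by
        rcases huN with h | h
        exacts [h, absurd h huS]
      have hCeq : C = Ci := comp_eq_of_meet hCcomp hex ⟨u, huC, hu⟩
      obtain ⟨K1, hK1⟩ := hg1.2.1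
      obtain ⟨c, hcC, hcK⟩ := (hmeetC K1 (Or.inl hK1)).2
      have hcCi : c ∈ Ci := hCeq ▸ hcC
      have hcp : c ∈ partVerts W Wo :=
        Set.notMem_compl_iff.mp (Set.disjoint_left.mp hCi.2.1 hcCi)
      exact Finset.disjoint_left.mp h1o hK1 (hcp K1 (hmeetC K1 (Or.inl hK1)).1 hcK)
  -- adjacency in H
  have hHadj : ∀ a b : V, H.Adj a b ↔
      ((a ≠ b ∧ a ∈ Om ∧ b ∈ Om) ∨ ∃ Ci ∈ Fam, (F Ci).Adj a b) := by
    intro a b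
    rw [hHE]
    simp only [SimpleGraph.sup_adj, SimpleGraph.iSup_adj, cliqueOn_adj, exists_prop]
  have hedge : ∀ a b : V, H.Adj a b → a ∉ Om →
      ∃ Ci ∈ Fam, (F Ci).Adj a b ∧ a ∈ Ci ∧ b ∈ closedNbhd G Ci := by
    intro a b hab haOm
    rcases (hHadj a b).mp hab with ⟨_, h, _⟩ | ⟨Ci, hCi, hadjF⟩
    · exact absurd h haOm
    · have hw := (hF Ci hCi).2.2 a b hadjF
      have haCi : a ∈ Ci := by
        rcases hw.1 with h | h
        · exact h
        · exact absurd (hnbOm' Ci hCi a h) haOm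
      exact ⟨Ci, hCi, hadjF, haCi, hw.2⟩
  have hinC : ∀ Ci ∈ Fam, ∀ b : V, b ∈ closedNbhd G Ci → b ∉ Om → b ∈ Ci := by
    intro Ci hCi b hb hbOm
    rcases hb with h | h
    · exact h
    · exact absurd (hnbOm' Ci hCi b h) hbOm
  refine ⟨?_, ?_, ?_⟩
  · -- chordality
    intro n hn f hinj hfadj
    haveI : NeZero n := ⟨by omega⟩
    have hz : ∀ a b : ℕ, a < n → b < n → a ≠ b → (a : ZMod n) ≠ (b : ZMod n) :=
      fun a b ha hb hne => zmod_cast_ne ha hb hne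
    have hz1 : (1 : ZMod n) ≠ 0 := by
      have := hz 1 0 (by omega) (by omega) (by omega); simpa using this
    have hz2 : (2 : ZMod n) ≠ 0 := by
      have := hz 2 0 (by omega) (by omega) (by omega); simpa using this
    have hz3 : (3 : ZMod n) ≠ 0 := by
      have := hz 3 0 (by omega) (by omega) (by omega); simpa using this
    have hz21 : (2 : ZMod n) ≠ 1 := by
      have := hz 2 1 (by omega) (by omega) (by omega); simpa using this
    have hz31 : (3 : ZMod n) ≠ 1 := by
      have := hz 3 1 (by omega) (by omega) (by omega); simpa using this
    by_contra hcon
    push_neg at hcon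
    have hOmadj : ∀ i j : ZMod n, f i ∈ Om → f j ∈ Om → i = j ∨ j = i + 1 ∨ i = j + 1 := by
      intro i j hi hj
      by_contra hc
      push_neg at hc
      exact hcon i j hc.1 hc.2.1 hc.2.2 ((hHadj _ _).mpr (Or.inl ⟨hinj.ne hc.1, hi, hj⟩))
    have hkex : ∃ k : ZMod n, ∀ i, f i ∈ Om → i = k ∨ i = k + 1 := by
      by_cases hex : ∃ i, f i ∈ Om
      · obtain ⟨p, hp⟩ := hex
        by_cases hp1 : f (p + 1) ∈ Om
        · refine ⟨p, fun i hi => ?_⟩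
          rcases hOmadj i p hi hp with h | h | h
          · exact Or.inl h
          · exfalso
            rcases hOmadj i (p + 1) hi hp1 with h2 | h2 | h2
            · exact hz2 (by linear_combination -h - h2)
            · exact hz1 (by linear_combination h2 - h)
            · exact hz3 (by linear_combination -h - h2)
          · exact Or.inr h
        · refine ⟨p - 1, fun i hi => ?_⟩
          rcases hOmadj i p hi hp with h | h | h
          · exact Or.inr (by rw [h, sub_add_cancel])
          · exact Or.inl (by linear_combination -h)
          · exact absurd (h ▸ hi) hp1
      · push_neg at hex
        exact ⟨0, fun i hi => absurd hi (hex i)⟩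
    obtain ⟨k, hk⟩ := hkex
    have hnotOm : ∀ i : ZMod n, i ≠ k → i ≠ k + 1 → f i ∉ Om := by
      intro i h1 h2 hi
      rcases hk i hi with h | h
      exacts [h1 h, h2 h]
    have hk2 : f (k + 2) ∉ Om :=
      hnotOm _ (fun h => hz2 (by linear_combination h)) (fun h => hz21 (by linear_combination h))
    obtain ⟨C0, hC0mem, hC0adj, hfk2C0, -⟩ := hedge _ _ (hfadj (k + 2)) hk2
    have hall : ∀ t : ℕ, t + 3 ≤ n → f (k + 2 + (t : ZMod n)) ∈ C0 := by
      intro t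
      induction t with
      | zero => intro _; simpa using hfk2C0
      | succ t ih =>
          intro ht
          have hiC0 : f (k + 2 + (t : ZMod n)) ∈ C0 := ih (by omega)
          have hiOm : f (k + 2 + (t : ZMod n)) ∉ Om := hCiOm' C0 hC0mem _ hiC0
          obtain ⟨Cj, hCjmem, hCjadj, hiCj, hnext⟩ :=
            hedge _ _ (hfadj (k + 2 + (t : ZMod n))) hiOm
          have hCj0 : Cj = C0 := huniq Cj hCjmem C0 hC0mem _ hiCj hiC0
          rw [hCj0] at hnext
          have hne1 : (k + 2 + (t : ZMod n)) + 1 ≠ k := by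
            intro h
            refine hz (t + 3) 0 (by omega) (by omega) (by omega) ?_
            push_cast
            linear_combination h
          have hne2 : (k + 2 + (t : ZMod n)) + 1 ≠ k + 1 := by
            intro h
            refine hz (t + 2) 0 (by omega) (by omega) (by omega) ?_
            push_cast
            linear_combination h
          have hmem : f ((k + 2 + (t : ZMod n)) + 1) ∈ C0 :=
            hinC C0 hC0mem _ hnext (hnotOm _ hne1 hne2)
          have hidx : k + 2 + ((t + 1 : ℕ) : ZMod n) = (k + 2 + (t : ZMod n)) + 1 := by
            push_cast
            ring
          rw [hidx]
          exact hmem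
    have halli : ∀ i : ZMod n, i ≠ k → i ≠ k + 1 → f i ∈ C0 := by
      intro i h1 h2
      have hcast : (((i - (k + 2)).val : ℕ) : ZMod n) = i - (k + 2) :=
        ZMod.natCast_rightInverse _
      have htn : (i - (k + 2)).val < n := ZMod.val_lt _
      have ht1 : (i - (k + 2)).val ≠ n - 2 := by
        intro h
        apply h1
        have heq : i - (k + 2) = ((n - 2 : ℕ) : ZMod n) := by rw [← hcast, h]
        have h2' : ((n - 2 : ℕ) : ZMod n) = -2 := by
          rw [Nat.cast_sub (by omega : 2 ≤ n)]
          simp [ZMod.natCast_self]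
        rw [h2'] at heq
        linear_combination heq
      have ht2 : (i - (k + 2)).val ≠ n - 1 := by
        intro h
        apply h2
        have heq : i - (k + 2) = ((n - 1 : ℕ) : ZMod n) := by rw [← hcast, h]
        have h2' : ((n - 1 : ℕ) : ZMod n) = -1 := by
          rw [Nat.cast_sub (by omega : 1 ≤ n)]
          simp [ZMod.natCast_self]
        rw [h2'] at heq
        linear_combination heq
      have hle : (i - (k + 2)).val + 3 ≤ n := by omega
      have h := hall _ hle
      rw [hcast] at h
      have hidx : k + 2 + (i - (k + 2)) = i := by ring
      rwa [hidx] at h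
    have hkm1a : k - 1 ≠ k := fun h => hz1 (by linear_combination -h)
    have hkm1b : k - 1 ≠ k + 1 := fun h => hz2 (by linear_combination -h)
    have fkm1 : f (k - 1) ∈ C0 := halli _ hkm1a hkm1b
    have hAedge : (F C0).Adj (f (k - 1)) (f (k - 1 + 1)) ∧ f (k - 1 + 1) ∈ closedNbhd G C0 := by
      obtain ⟨Cj, hCjmem, hCjadj, hiCj, hnext⟩ :=
        hedge _ _ (hfadj (k - 1)) (hCiOm' C0 hC0mem _ fkm1)
      have hCj0 : Cj = C0 := huniq Cj hCjmem C0 hC0mem _ hiCj fkm1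
      rw [hCj0] at hCjadj hnext
      exact ⟨hCjadj, hnext⟩
    have hkN : f k ∈ closedNbhd G C0 := by
      have h := hAedge.2
      rwa [sub_add_cancel] at h
    have he12 : k + 1 + 1 = k + 2 := by ring
    have hBedge : (F C0).Adj (f (k + 1)) (f (k + 1 + 1)) ∧ f (k + 1) ∈ closedNbhd G C0 := by
      have h21 : H.Adj (f (k + 1 + 1)) (f (k + 1)) := (hfadj (k + 1)).symm
      rw [he12] at h21
      obtain ⟨Cj, hCjmem, hCjadj, hiCj, hnext⟩ :=
        hedge _ _ h21 (hCiOm' C0 hC0mem _ hfk2C0)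
      have hCj0 : Cj = C0 := huniq Cj hCjmem C0 hC0mem _ hiCj hfk2C0
      rw [hCj0] at hCjadj hnext
      rw [he12]
      exact ⟨hCjadj.symm, hnext⟩
    have hEdges : ∀ i : ZMod n, (F C0).Adj (f i) (f (i + 1)) := by
      intro i
      by_cases hik : i = k
      · subst hik
        by_cases h1 : f i ∈ Om
        · by_cases h2 : f (i + 1) ∈ Om
          · have hkNb : f i ∈ nbhd G C0 := by
              rcases hkN with h | h
              · exact absurd h1 (hCiOm' C0 hC0mem _ h)
              · exact h
            have hk1Nb : f (i + 1) ∈ nbhd G C0 := by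
              rcases hBedge.2 with h | h
              · exact absurd h2 (hCiOm' C0 hC0mem _ h)
              · exact h
            refine (hF C0 hC0mem).2.1 ?_
            rw [realization_adj]
            exact ⟨hinj.ne (fun h => hz1 (by linear_combination -h)), hkN, hBedge.2,
              Or.inr ⟨hkNb, hk1Nb⟩⟩
          · have h21 : H.Adj (f (i + 1)) (f i) := (hfadj i).symm
            obtain ⟨Cj, hCjmem, hCjadj, hiCj, hnext⟩ := hedge _ _ h21 h2
            have hmemC0 : f (i + 1) ∈ C0 := hinC C0 hC0mem _ hBedge.2 h2
            have hCj0 : Cj = C0 := huniq Cj hCjmem C0 hC0mem _ hiCj hmemC0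
            rw [hCj0] at hCjadj
            exact hCjadj.symm
        · obtain ⟨Cj, hCjmem, hCjadj, hiCj, hnext⟩ := hedge _ _ (hfadj i) h1
          have hmemC0 : f i ∈ C0 := hinC C0 hC0mem _ hkN h1
          have hCj0 : Cj = C0 := huniq Cj hCjmem C0 hC0mem _ hiCj hmemC0
          rw [hCj0] at hCjadj
          exact hCjadj
      · by_cases hik1 : i = k + 1
        · subst hik1
          exact hBedge.1
        · by_cases hikm : i = k - 1
          · subst hikm
            exact hAedge.1
          · have hfiC0 : f i ∈ C0 := halli i hik hik1
            have hnk : i + 1 ≠ k := by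
              intro h
              exact hikm (by linear_combination h)
            have hnk1 : i + 1 ≠ k + 1 := by
              intro h
              exact hik (by linear_combination h)
            obtain ⟨Cj, hCjmem, hCjadj, hiCj, hnext⟩ :=
              hedge _ _ (hfadj i) (hCiOm' C0 hC0mem _ hfiC0)
            have hCj0 : Cj = C0 := huniq Cj hCjmem C0 hC0mem _ hiCj hfiC0
            rw [hCj0] at hCjadj
            exact hCjadj
    obtain ⟨i, j, hij1, hij2, hij3, hadjF⟩ := (hF C0 hC0mem).1 n hn f hinj hEdges
    exact hcon i j hij1 hij2 hij3 ((hHadj _ _).mpr (Or.inr ⟨C0, hC0mem, hadjF⟩))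
  · -- realization G C ≤ H
    have key : ∀ a b : V, G.Adj a b → a ∉ Om → a ∈ closedNbhd G C →
        ∃ Ci ∈ Fam, (F Ci).Adj a b := by
      intro a b hadj haOm haN
      obtain ⟨Ci, hCi, haCi⟩ := hmemblk a haOm haN
      refine ⟨Ci, hCi, (hF Ci hCi).2.1 ?_⟩
      rw [realization_adj]
      refine ⟨hadj.ne, Set.mem_union_left _ haCi, ?_, Or.inl hadj⟩
      by_cases hbCi : b ∈ Ci
      · exact Set.mem_union_left _ hbCi
      · exact Set.mem_union_right _ ⟨hbCi, a, haCi, hadj⟩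
    intro a b hab
    obtain ⟨hne, haN, hbN, hor⟩ := hab
    rcases hor with hadj | ⟨haS, hbS⟩
    · by_cases haOm : a ∈ Om
      · by_cases hbOm : b ∈ Om
        · exact (hHadj a b).mpr (Or.inl ⟨hne, haOm, hbOm⟩)
        · exact ((hHadj b a).mpr (Or.inr (key b a hadj.symm hbOm hbN))).symm
      · exact (hHadj a b).mpr (Or.inr (key a b hadj haOm haN))
    · exact (hHadj a b).mpr (Or.inl ⟨hne, hSOm a haS, hSOm b hbS⟩)
  · -- edges within N[C]
    intro a b hab
    rcases (hHadj a b).mp hab with ⟨hne, ha, hb⟩ | ⟨Ci, hCi, hadjF⟩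
    · exact ⟨hOmN a ha, hOmN b hb⟩
    · have hw := (hF Ci hCi).2.2 a b hadjF
      exact ⟨hfamN Ci hCi a hw.1, hfamN Ci hCi b hw.2⟩

end PaperECC
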